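/- Let m₁, m₂ : (0,∞) → (0,∞) be functions with m₁(t) + m₂(t) = t for all t ∈ (0,1). Assume that for j = 1,2 the function m_j is either regularly varying at 0 with index ρ_j ∈ (0,∞) or rapidly varying at 0 (in which case set ρ_j = ∞). Then min{ρ₁, ρ₂} = 1 (in particular, at least one of ρ₁, ρ₂ is finite and equal to 1). -/

import Mathlib

open MeasureTheory Filter Set Topology Real

open scoped ENNReal

noncomputable section

/-- `f : (0,∞) → (0,∞)` is regularly varying at `0` with index `ρ`:
for every `λ > 0`, `f(λt)/f(t) → λ^ρ` as `t → 0⁺`. -/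
def RegVaryAt0 (f : ℝ → ℝ) (ρ : ℝ) : Prop :=
  ∀ l : ℝ, 0 < l →
    Tendsto (fun t => f (l * t) / f t) (𝓝[>] (0:ℝ)) (𝓝 (l ^ ρ))

/-- `f : (0,∞) → (0,∞)` is rapidly varying at `0` (index `∞`). -/
def RapidVaryAt0 (f : ℝ → ℝ) : Prop :=
  (∀ l : ℝ, l ∈ Ioo (0:ℝ) 1 →
      Tendsto (fun t => f (l * t) / f t) (𝓝[>] (0:ℝ)) (𝓝 0)) ∧
  (∀ l : ℝ, 1 < l →
      Tendsto (fun t => f (l * t) / f t) (𝓝[>] (0:ℝ)) atTop)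


/-- Lemma A: a positive function bounded by `t` on `(0,1)` cannot be
regularly varying at 0 with index `< 1`. -/
lemma lemA (m : ℝ → ℝ) (hpos : ∀ t ∈ Ioo (0:ℝ) 1, 0 < m t)
    (hlt : ∀ t ∈ Ioo (0:ℝ) 1, m t < t) (ρ : ℝ)
    (h : Tendsto (fun t => m ((1/2) * t) / m t) (𝓝[>] (0:ℝ)) (𝓝 ((1/2 : ℝ) ^ ρ))) :
    1 ≤ ρ := by
  by_contra hρ
  push_neg at hρ
  set a : ℝ → ℝ := fun t => m t / t with ha_def
  set L : ℝ := 2 * (1/2 : ℝ) ^ ρ with hL_def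
  have hhalf : (1/2 : ℝ) ^ ρ > (1/2 : ℝ) := by
    have := (Real.rpow_lt_rpow_left_iff_of_base_lt_one (by norm_num : (0:ℝ) < 1/2)
      (by norm_num : (1/2:ℝ) < 1)).mpr hρ
    simpa [Real.rpow_one] using this
  have hL : 1 < L := by simp only [hL_def]; linarith
  set c : ℝ := (1 + L) / 2 with hc_def
  have hc1 : 1 < c := by simp only [hc_def]; linarith
  have hcL : c < L := by simp only [hc_def]; linarith
  have h2r : Tendsto (fun t => 2 * (m ((1/2)*t) / m t)) (𝓝[>] (0:ℝ)) (𝓝 L) := by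
    simpa [hL_def] using h.const_mul 2
  have hev1 : ∀ᶠ t in 𝓝[>] (0:ℝ), c < 2 * (m ((1/2)*t) / m t) :=
    h2r.eventually (eventually_gt_nhds hcL)
  have hev2 : ∀ᶠ t in 𝓝[>] (0:ℝ), t ∈ Ioo (0:ℝ) 1 :=
    Ioo_mem_nhdsGT_of_mem (by constructor <;> norm_num)
  have hev : ∀ᶠ t in 𝓝[>] (0:ℝ),
      t ∈ Ioo (0:ℝ) 1 ∧ c < 2 * (m ((1/2)*t) / m t) := hev2.and hev1
  rw [eventually_iff, mem_nhdsGT_iff_exists_Ioo_subset] at hev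
  obtain ⟨u, hu, hsub⟩ := hev
  rw [mem_Ioi] at hu
  set t₀ : ℝ := min u 1 / 2 with ht₀_def
  have ht₀pos : 0 < t₀ := by positivity
  have ht₀u : t₀ < u := by
    have : min u 1 ≤ u := min_le_left _ _
    simp only [ht₀_def]; linarith
  have ht₀1 : t₀ < 1 := by
    have : min u 1 ≤ 1 := min_le_right _ _
    simp only [ht₀_def]; linarith
  -- the sequence tₙ = (1/2)^n * t₀ stays in (0, u)
  have hseq : ∀ n : ℕ, (1/2 : ℝ)^n * t₀ ∈ Ioo (0:ℝ) u := by
    intro n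
    constructor
    · positivity
    · have h1 : (1/2 : ℝ)^n ≤ 1 := pow_le_one₀ (by norm_num) (by norm_num)
      nlinarith
  have hstep : ∀ t ∈ Ioo (0:ℝ) u, c * a t ≤ a ((1/2) * t) := by
    intro t ht
    obtain ⟨htI, hr⟩ := hsub ht
    have ht0 : (0:ℝ) < t := htI.1
    have hmt : 0 < m t := hpos t htI
    have hat : a ((1/2)*t) = (2 * (m ((1/2)*t) / m t)) * a t := by
      simp only [ha_def]
      field_simp
    have hat0 : 0 < a t := div_pos hmt ht0
    rw [hat]
    exact mul_le_mul_of_nonneg_right hr.le hat0.le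
  have hub : ∀ t ∈ Ioo (0:ℝ) 1, a t < 1 := by
    intro t ht
    exact (div_lt_one ht.1).mpr (hlt t ht)
  have hind : ∀ n : ℕ, c^n * a t₀ ≤ a ((1/2 : ℝ)^n * t₀) := by
    intro n
    induction n with
    | zero => simp
    | succ n ih =>
      have h1 := hstep _ (hseq n)
      have h2 : (1/2 : ℝ) * ((1/2:ℝ)^n * t₀) = (1/2:ℝ)^(n+1) * t₀ := by ring
      rw [h2] at h1
      have hc0 : 0 < c := by linarith
      calc c^(n+1) * a t₀ = c * (c^n * a t₀) := by ring
        _ ≤ c * a ((1/2:ℝ)^n * t₀) := by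
            exact mul_le_mul_of_nonneg_left ih hc0.le
        _ ≤ a ((1/2:ℝ)^(n+1) * t₀) := h1
  have hat₀ : 0 < a t₀ := div_pos (hpos t₀ ⟨ht₀pos, ht₀1⟩) ht₀pos
  obtain ⟨n, hn⟩ := pow_unbounded_of_one_lt (1 / a t₀) hc1
  have hlt1 : a ((1/2:ℝ)^n * t₀) < 1 := by
    apply hub
    refine ⟨(hseq n).1, ?_⟩
    have h1 : (1/2 : ℝ)^n ≤ 1 := pow_le_one₀ (by norm_num) (by norm_num)
    nlinarith
  have : 1 < c^n * a t₀ := by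
    rw [div_lt_iff₀ hat₀] at hn
    linarith
  linarith [hind n]



lemma lemB (m₁ m₂ : ℝ → ℝ)
    (hm₁pos : ∀ t > (0:ℝ), 0 < m₁ t) (hm₂pos : ∀ t > (0:ℝ), 0 < m₂ t)
    (hsum : ∀ t ∈ Ioo (0:ℝ) 1, m₁ t + m₂ t = t)
    (L₁ L₂ : ℝ)
    (hr₁ : Tendsto (fun t => m₁ ((1/2) * t) / m₁ t) (𝓝[>] (0:ℝ)) (𝓝 L₁))
    (hr₂ : Tendsto (fun t => m₂ ((1/2) * t) / m₂ t) (𝓝[>] (0:ℝ)) (𝓝 L₂))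
    (hL₁ : L₁ < 1/2) (hL₂ : L₂ < 1/2) : False := by
  have hev1 : ∀ᶠ t in 𝓝[>] (0:ℝ), m₁ ((1/2)*t) / m₁ t < 1/2 :=
    hr₁.eventually (eventually_lt_nhds hL₁)
  have hev2 : ∀ᶠ t in 𝓝[>] (0:ℝ), m₂ ((1/2)*t) / m₂ t < 1/2 :=
    hr₂.eventually (eventually_lt_nhds hL₂)
  have hev3 : ∀ᶠ t in 𝓝[>] (0:ℝ), t ∈ Ioo (0:ℝ) 1 :=
    Ioo_mem_nhdsGT_of_mem (by constructor <;> norm_num)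
  obtain ⟨t, ⟨h1, h2⟩, ht⟩ := ((hev1.and hev2).and hev3).exists
  have ht0 : (0:ℝ) < t := ht.1
  have hth : (1/2 : ℝ) * t ∈ Ioo (0:ℝ) 1 := ⟨by linarith, by nlinarith [ht.2]⟩
  have hm1 : 0 < m₁ t := hm₁pos t ht0
  have hm2 : 0 < m₂ t := hm₂pos t ht0
  have hm1h : 0 < m₁ ((1/2)*t) := hm₁pos _ hth.1
  have hm2h : 0 < m₂ ((1/2)*t) := hm₂pos _ hth.1
  have hs : m₁ t + m₂ t = t := hsum t ht
  have hsh : m₁ ((1/2)*t) + m₂ ((1/2)*t) = (1/2)*t := hsum _ hth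
  -- from the ratio bounds: m₁((1/2)t) < m₁ t / 2, m₂((1/2)t) < m₂ t / 2
  have b1 : m₁ ((1/2)*t) < m₁ t / 2 := by
    rw [div_lt_iff₀ hm1] at h1; linarith
  have b2 : m₂ ((1/2)*t) < m₂ t / 2 := by
    rw [div_lt_iff₀ hm2] at h2; linarith
  linarith


theorem stmt17 (m₁ m₂ : ℝ → ℝ)
    (hmeas₁ : Measurable m₁) (hmeas₂ : Measurable m₂)
    (hm₁pos : ∀ t > (0:ℝ), 0 < m₁ t) (hm₂pos : ∀ t > (0:ℝ), 0 < m₂ t)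
    (hsum : ∀ t ∈ Ioo (0:ℝ) 1, m₁ t + m₂ t = t)
    (ρ₁ ρ₂ : ℝ≥0∞) (hρ₁pos : 0 < ρ₁) (hρ₂pos : 0 < ρ₂)
    (h₁fin : ρ₁ ≠ ⊤ → RegVaryAt0 m₁ ρ₁.toReal)
    (h₁inf : ρ₁ = ⊤ → RapidVaryAt0 m₁)
    (h₂fin : ρ₂ ≠ ⊤ → RegVaryAt0 m₂ ρ₂.toReal)
    (h₂inf : ρ₂ = ⊤ → RapidVaryAt0 m₂) :
    min ρ₁ ρ₂ = 1 := by
  have hpos₁ : ∀ t ∈ Ioo (0:ℝ) 1, 0 < m₁ t := fun t ht => hm₁pos t ht.1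
  have hpos₂ : ∀ t ∈ Ioo (0:ℝ) 1, 0 < m₂ t := fun t ht => hm₂pos t ht.1
  have hlt₁ : ∀ t ∈ Ioo (0:ℝ) 1, m₁ t < t := by
    intro t ht; have := hsum t ht; have := hpos₂ t ht; linarith
  have hlt₂ : ∀ t ∈ Ioo (0:ℝ) 1, m₂ t < t := by
    intro t ht; have := hsum t ht; have := hpos₁ t ht; linarith
  have hsum' : ∀ t ∈ Ioo (0:ℝ) 1, m₂ t + m₁ t = t := by
    intro t ht; have := hsum t ht; linarith
  -- 1 ≤ min : any finite index is ≥ 1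
  have hge : ∀ (ρ : ℝ≥0∞) (m : ℝ → ℝ), (∀ t ∈ Ioo (0:ℝ) 1, 0 < m t) →
      (∀ t ∈ Ioo (0:ℝ) 1, m t < t) → (ρ ≠ ⊤ → RegVaryAt0 m ρ.toReal) → 1 ≤ ρ := by
    intro ρ m hp hl hfin
    rcases eq_or_ne ρ ⊤ with h | h
    · simp [h]
    · have h1 : 1 ≤ ρ.toReal :=
        lemA m hp hl ρ.toReal (hfin h (1/2) (by norm_num))
      rw [← ENNReal.ofReal_toReal h, ← ENNReal.ofReal_one]
      exact ENNReal.ofReal_le_ofReal h1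
  have h1le : 1 ≤ min ρ₁ ρ₂ :=
    le_min (hge ρ₁ m₁ hpos₁ hlt₁ h₁fin) (hge ρ₂ m₂ hpos₂ hlt₂ h₂fin)
  -- min ≤ 1 : otherwise both half-ratios tend to limits < 1/2
  have hle : min ρ₁ ρ₂ ≤ 1 := by
    by_contra hmin
    push_neg at hmin
    rw [lt_min_iff] at hmin
    obtain ⟨h1, h2⟩ := hmin
    have key : ∀ (ρ : ℝ≥0∞) (m : ℝ → ℝ), 1 < ρ → (ρ ≠ ⊤ → RegVaryAt0 m ρ.toReal) →
        (ρ = ⊤ → RapidVaryAt0 m) →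
        ∃ L : ℝ, Tendsto (fun t => m ((1/2) * t) / m t) (𝓝[>] (0:ℝ)) (𝓝 L) ∧ L < 1/2 := by
      intro ρ m hρ hfin hinf
      rcases eq_or_ne ρ ⊤ with h | h
      · exact ⟨0, (hinf h).1 (1/2) ⟨by norm_num, by norm_num⟩, by norm_num⟩
      · refine ⟨(1/2 : ℝ) ^ ρ.toReal, hfin h (1/2) (by norm_num), ?_⟩
        have hσ : (1:ℝ) < ρ.toReal := by
          have := ENNReal.toReal_strict_mono h hρ
          simpa using this
        have := (Real.rpow_lt_rpow_left_iff_of_base_lt_one (by norm_num : (0:ℝ) < 1/2)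
          (by norm_num : (1/2:ℝ) < 1)).mpr hσ
        simpa [Real.rpow_one] using this
    obtain ⟨L₁, hr₁, hL₁⟩ := key ρ₁ m₁ h1 h₁fin h₁inf
    obtain ⟨L₂, hr₂, hL₂⟩ := key ρ₂ m₂ h2 h₂fin h₂inf
    exact lemB m₁ m₂ hm₁pos hm₂pos hsum L₁ L₂ hr₁ hr₂ hL₁ hL₂
  exact le_antisymm hle h1le
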